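/- Suppose log g has L_g-Lipschitz gradient and the log-transition density x' ↦ log m_{t+1}(x_{t+1}|x') is uniformly L_τ-Lipschitz. If γ ≤ 1/L_g and ‖∇log g(x_t)‖₂ ≥ 2L_τ, then with β(x_t) = x_t + γ∇log g(x_t) we have g(β(x_t))/g(x_t) ≥ sup_{x_{t+1}} m_{t+1}(x_{t+1}|x_t)/m_{t+1}(x_{t+1}|β(x_t)). In other words, the gain in likelihood from the gradient step dominates the worst-case loss in the transition density. -/

import Mathlib

open InnerProductSpace

lemma descent_aux {d : ℕ} (f : EuclideanSpace ℝ (Fin d) → ℝ)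
    (hdiff : Differentiable ℝ f) (L : ℝ)
    (hLip : ∀ x x', ‖gradient f x - gradient f x'‖ ≤ L * ‖x - x'‖)
    (x v : EuclideanSpace ℝ (Fin d)) :
    f x + ⟪gradient f x, v⟫_ℝ - L / 2 * ‖v‖ ^ 2 ≤ f (x + v) := by
  set G := gradient f x with hG
  -- φ t = f (x + t • v)
  have hφ : ∀ t : ℝ, HasDerivAt (fun t => f (x + t • v))
      ⟪gradient f (x + t • v), v⟫_ℝ t := by
    intro t
    have h1 : HasDerivAt (fun t : ℝ => x + t • v) v t := by
      simpa using ((hasDerivAt_id t).smul_const v).const_add x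
    have h2 := ((hdiff (x + t • v)).hasGradientAt).hasFDerivAt
    have := h2.comp_hasDerivAt t h1
    simp [toDual_apply_apply] at this ⊢
    exact this
  -- ψ t = φ t - t * ⟪G, v⟫ + L * ‖v‖^2 * t^2 / 2
  set ψ : ℝ → ℝ := fun t => f (x + t • v) - t * ⟪G, v⟫_ℝ + L * ‖v‖ ^ 2 * t ^ 2 / 2 with hψ
  have hψd : ∀ t : ℝ, HasDerivAt ψ
      (⟪gradient f (x + t • v), v⟫_ℝ - ⟪G, v⟫_ℝ + L * ‖v‖ ^ 2 * t) t := by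
    intro t
    have h1 := (hφ t).sub ((hasDerivAt_id t).const_mul (⟪G, v⟫_ℝ))
    have h2 : HasDerivAt (fun t : ℝ => L * ‖v‖ ^ 2 * t ^ 2 / 2) (L * ‖v‖ ^ 2 * t) t := by
      have := ((hasDerivAt_pow 2 t).const_mul (L * ‖v‖ ^ 2)).div_const 2
      refine this.congr_deriv ?_
      norm_num
      ring
    have := h1.add h2
    have e : ψ = ((fun t => f (x + t • v)) - fun y => ⟪G, v⟫_ℝ * id y) + fun t => L * ‖v‖ ^ 2 * t ^ 2 / 2 := by
      ext s; simp only [hψ, Pi.add_apply, Pi.sub_apply, id]; ring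
    rw [e]; exact this.congr_deriv (by ring)
  have hmono : MonotoneOn ψ (Set.Icc (0:ℝ) 1) := by
    apply monotoneOn_of_deriv_nonneg (convex_Icc 0 1)
    · exact (fun t _ => ((hψd t).differentiableAt).continuousAt.continuousWithinAt)
    · exact fun t _ => ((hψd t).differentiableAt).differentiableWithinAt
    · intro t ht
      rw [(hψd t).deriv]
      have ht' : t ∈ Set.Ioo (0:ℝ) 1 := by
        simpa [interior_Icc] using ht
      have h1 : ⟪G, v⟫_ℝ - ⟪gradient f (x + t • v), v⟫_ℝ ≤ L * ‖v‖ ^ 2 * t := by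
        calc ⟪G, v⟫_ℝ - ⟪gradient f (x + t • v), v⟫_ℝ
            = ⟪G - gradient f (x + t • v), v⟫_ℝ := by rw [inner_sub_left]
          _ ≤ ‖G - gradient f (x + t • v)‖ * ‖v‖ := real_inner_le_norm _ _
          _ ≤ (L * ‖x - (x + t • v)‖) * ‖v‖ :=
              mul_le_mul_of_nonneg_right (hLip _ _) (norm_nonneg _)
          _ = L * ‖v‖ ^ 2 * t := by
              have : x - (x + t • v) = (-t) • v := by module
              rw [this, norm_smul]
              simp [abs_of_pos ht'.1]
              ring
      linarith
  have key := hmono (Set.left_mem_Icc.2 (by norm_num)) (Set.right_mem_Icc.2 (by norm_num)) zero_le_one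
  have h0 : ψ 0 = f x := by
    simp only [hψ]; rw [zero_smul, add_zero]; norm_num
  have h1 : ψ 1 = f (x + v) - ⟪G, v⟫_ℝ + L * ‖v‖ ^ 2 / 2 := by
    simp only [hψ]; rw [one_smul]; ring
  rw [h0, h1] at key
  linarith

/-- Lemma 3 of the paper: when the gradient of `log g` is large enough
(`‖∇ log g(x_t)‖ ≥ 2L_τ`) and `γ ≤ 1/L_g`, the likelihood gain from the gradient step
dominates the worst-case loss in the transition density. -/
theorem stmt_9 (d : ℕ)
    (g : EuclideanSpace ℝ (Fin d) → ℝ) (hgpos : ∀ x, 0 < g x)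
    (hdiff : Differentiable ℝ fun x => Real.log (g x))
    (Lg : ℝ)
    (hLip : ∀ x x', ‖gradient (fun y => Real.log (g y)) x -
        gradient (fun y => Real.log (g y)) x'‖ ≤ Lg * ‖x - x'‖)
    (m : EuclideanSpace ℝ (Fin d) → EuclideanSpace ℝ (Fin d) → ℝ)
    (hmpos : ∀ x x', 0 < m x x')
    (Lτ : ℝ)
    (hmLip : ∀ x x' x'', |Real.log (m x x') - Real.log (m x x'')| ≤ Lτ * ‖x' - x''‖)
    (γ : ℝ) (hγ0 : 0 < γ) (hγ : γ ≤ 1 / Lg)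
    (xt : EuclideanSpace ℝ (Fin d))
    (hgrad : 2 * Lτ ≤ ‖gradient (fun y => Real.log (g y)) xt‖) :
    ∀ xnext : EuclideanSpace ℝ (Fin d),
      m xnext xt / m xnext (xt + γ • gradient (fun y => Real.log (g y)) xt)
        ≤ g (xt + γ • gradient (fun y => Real.log (g y)) xt) / g xt := by
  intro xnext
  set f : EuclideanSpace ℝ (Fin d) → ℝ := fun y => Real.log (g y) with hf
  set G := gradient f xt with hG
  set β := xt + γ • G with hβ
  -- Lg must be positive
  have hLg : 0 < Lg := by
    by_contra h
    push_neg at h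
    have : (1 : ℝ) / Lg ≤ 0 := one_div_nonpos.2 h
    linarith
  have hγLg : γ * Lg ≤ 1 := by
    rw [← le_div_iff₀ hLg] at *
    exact hγ
  -- descent
  have hdesc := descent_aux f hdiff Lg hLip xt (γ • G)
  have hinner : ⟪G, γ • G⟫_ℝ = γ * ‖G‖ ^ 2 := by
    rw [real_inner_smul_right, real_inner_self_eq_norm_sq]
  have hnorm : ‖γ • G‖ ^ 2 = γ ^ 2 * ‖G‖ ^ 2 := by
    rw [norm_smul, mul_pow]
    simp [abs_of_pos hγ0]
  rw [hinner, hnorm] at hdesc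
  -- f β - f xt ≥ (γ/2) ‖G‖²
  have hstep : f xt + γ / 2 * ‖G‖ ^ 2 ≤ f β := by
    have h1 : Lg / 2 * (γ ^ 2 * ‖G‖ ^ 2) ≤ γ / 2 * ‖G‖ ^ 2 := by
      nlinarith [sq_nonneg ‖G‖, hγ0.le]
    calc f xt + γ / 2 * ‖G‖ ^ 2 = f xt + γ * ‖G‖ ^ 2 - γ / 2 * ‖G‖ ^ 2 := by ring
      _ ≤ f xt + γ * ‖G‖ ^ 2 - Lg / 2 * (γ ^ 2 * ‖G‖ ^ 2) := by linarith
      _ ≤ f β := hdesc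
  -- transition bound
  have htrans : Real.log (m xnext xt) - Real.log (m xnext β) ≤ Lτ * (γ * ‖G‖) := by
    have := (abs_le.1 (hmLip xnext xt β)).2
    have hxtβ : ‖xt - β‖ = γ * ‖G‖ := by
      have : xt - β = (-γ) • G := by rw [hβ]; module
      rw [this, norm_smul]
      simp [abs_of_pos hγ0]
    rwa [hxtβ] at this
  have hLτ : Lτ * (γ * ‖G‖) ≤ γ / 2 * ‖G‖ ^ 2 := by
    nlinarith [mul_le_mul_of_nonneg_right hgrad (mul_nonneg hγ0.le (norm_nonneg G))]
  -- combine and exponentiate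
  have hkey : Real.log (m xnext xt) - Real.log (m xnext β) ≤ f β - f xt := by
    linarith
  have h1 := Real.exp_le_exp.2 hkey
  rw [Real.exp_sub, Real.exp_sub, Real.exp_log (hmpos xnext xt),
    Real.exp_log (hmpos xnext β), hf] at h1
  simp only at h1
  rw [Real.exp_log (hgpos β), Real.exp_log (hgpos xt)] at h1
  exact h1
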